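/- Let f = f₀ + g be semiquasihomogeneous of type (d; w₁,...,wₙ) (deg g > d, f₀ quasihomogeneous of degree d) and let u be a unit in ℂ{x} (or a formal power series with u(0) ≠ 0). Writing u(0) = νᵈ for some ν ∈ ℂ* and letting ψ be the automorphism ψ(xᵢ) = ν^{wᵢ}xᵢ, the power series (u·f) ∘ ψ⁻¹ has the form f₀ + g' with deg g' > d. In particular u·f is right equivalent to a semiquasihomogeneous power series with the same principal part f₀. -/

import Mathlib

open MvPowerSeries

/-- Weighted order of a multivariate power series (⊤ for the zero series). -/
noncomputable def wOrd {n : ℕ} (w : Fin n → ℕ) (g : MvPowerSeries (Fin n) ℂ) : ℕ∞ :=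
  sInf {m : ℕ∞ | ∃ α : Fin n →₀ ℕ, MvPowerSeries.coeff α g ≠ 0 ∧ m = (∑ i, w i * α i : ℕ)}

/-- Let `f = f₀ + g` be semiquasihomogeneous of type `(d; w)` and `u` a unit with
`u(0) = νᵈ`. Composing `u·f` with the inverse of the automorphism `ψ(xᵢ) = ν^{wᵢ}xᵢ`
(whose effect on the coefficient of `xᵅ` is multiplication by `ν^{-deg α}`) yields a
power series of the form `f₀ + g'` with `deg g' > d`; hence `u·f` is right equivalent to
a semiquasihomogeneous series with the same principal part `f₀`. -/
theorem unit_times_sqh_right_equivalent (n : ℕ) (w : Fin n → ℕ) (hw : ∀ i, 0 < w i)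
    (d : ℕ) (f₀ g : MvPowerSeries (Fin n) ℂ)
    (hf₀ : ∀ α : Fin n →₀ ℕ, MvPowerSeries.coeff α f₀ ≠ 0 → ∑ i, w i * α i = d)
    (hg : (d : ℕ∞) < wOrd w g)
    (u : MvPowerSeries (Fin n) ℂ) (ν : ℂˣ)
    (hu : MvPowerSeries.constantCoeff u = (ν : ℂ) ^ d) :
    ∃ g' : MvPowerSeries (Fin n) ℂ,
      ((fun α : Fin n →₀ ℕ =>
          ((ν⁻¹ : ℂˣ) : ℂ) ^ (∑ i, w i * α i) * MvPowerSeries.coeff α (u * (f₀ + g)))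
        : MvPowerSeries (Fin n) ℂ) = f₀ + g' ∧
      (d : ℕ∞) < wOrd w g' := by
  classical
  have hadd : ∀ β γ : Fin n →₀ ℕ,
      (∑ i, w i * (β + γ) i) = (∑ i, w i * β i) + (∑ i, w i * γ i) := by
    intro β γ
    simp [Finsupp.add_apply, Nat.mul_add, Finset.sum_add_distrib]
  have hzero : ∀ β : Fin n →₀ ℕ, (∑ i, w i * β i) = 0 → β = 0 := by
    intro β h
    ext i
    have := Finset.sum_eq_zero_iff.mp h i (Finset.mem_univ i)
    simpa [Nat.mul_eq_zero, (hw i).ne'] using this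
  have hgc : ∀ α : Fin n →₀ ℕ, (∑ i, w i * α i) ≤ d → MvPowerSeries.coeff α g = 0 := by
    intro α hα
    by_contra h
    have hmem : ((∑ i, w i * α i : ℕ) : ℕ∞) ∈
        {m : ℕ∞ | ∃ β : Fin n →₀ ℕ, MvPowerSeries.coeff β g ≠ 0 ∧
          m = (∑ i, w i * β i : ℕ)} := ⟨α, h, rfl⟩
    have h1 : (d : ℕ∞) < ((∑ i, w i * α i : ℕ) : ℕ∞) := lt_of_lt_of_le hg (sInf_le hmem)
    exact absurd (Nat.cast_le.mpr hα) (not_le.mpr h1)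
  have key : ∀ α : Fin n →₀ ℕ, (∑ i, w i * α i) ≤ d →
      ((ν⁻¹ : ℂˣ) : ℂ) ^ (∑ i, w i * α i) * MvPowerSeries.coeff α (u * (f₀ + g))
        = MvPowerSeries.coeff α f₀ := by
    intro α hα
    rw [MvPowerSeries.coeff_mul]
    have hsum : ∑ p ∈ Finset.HasAntidiagonal.antidiagonal α,
        MvPowerSeries.coeff p.1 u * MvPowerSeries.coeff p.2 (f₀ + g)
        = MvPowerSeries.coeff 0 u * MvPowerSeries.coeff α (f₀ + g) := by
      apply Finset.sum_eq_single ((0 : Fin n →₀ ℕ), α)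
      · intro p hp hne
        have hpsum : p.1 + p.2 = α := (Finset.HasAntidiagonal.mem_antidiagonal).mp hp
        have hDsum : (∑ i, w i * p.1 i) + (∑ i, w i * p.2 i) = (∑ i, w i * α i) := by
          rw [← hadd, hpsum]
        have hD2 : (∑ i, w i * p.2 i) ≤ d := by omega
        have hg2 : MvPowerSeries.coeff p.2 g = 0 := hgc _ hD2
        have hf2 : MvPowerSeries.coeff p.2 f₀ = 0 := by
          by_contra h
          have hd2 : (∑ i, w i * p.2 i) = d := hf₀ _ h
          have h1 : (∑ i, w i * p.1 i) = 0 := by omega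
          have hp1 : p.1 = 0 := hzero _ h1
          have hp2 : p.2 = α := by rw [hp1, zero_add] at hpsum; exact hpsum
          exact hne (Prod.ext hp1 hp2)
        simp [hf2, hg2]
      · intro h
        exact absurd ((Finset.HasAntidiagonal.mem_antidiagonal).mpr (zero_add α)) h
    rw [hsum]
    simp only [map_add]
    rw [hgc α hα, add_zero, MvPowerSeries.coeff_zero_eq_constantCoeff, hu]
    by_cases hfz : MvPowerSeries.coeff α f₀ = 0
    · simp [hfz]
    · rw [hf₀ α hfz, ← mul_assoc, ← mul_pow]
      norm_num
  set F : MvPowerSeries (Fin n) ℂ := (fun α : Fin n →₀ ℕ =>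
      ((ν⁻¹ : ℂˣ) : ℂ) ^ (∑ i, w i * α i) * MvPowerSeries.coeff α (u * (f₀ + g))) with hF
  have hFc : ∀ α : Fin n →₀ ℕ, MvPowerSeries.coeff α F
      = ((ν⁻¹ : ℂˣ) : ℂ) ^ (∑ i, w i * α i) * MvPowerSeries.coeff α (u * (f₀ + g)) := by
    intro α; rfl
  refine ⟨F - f₀, by rw [add_sub_cancel], ?_⟩
  have hcoe : ∀ α : Fin n →₀ ℕ, MvPowerSeries.coeff α (F - f₀) ≠ 0 →
      d < (∑ i, w i * α i) := by
    intro α hne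
    by_contra h
    push_neg at h
    apply hne
    rw [map_sub, hFc, key α h, sub_self]
  unfold wOrd
  refine lt_of_lt_of_le (b := ((d + 1 : ℕ) : ℕ∞)) (by exact_mod_cast Nat.lt_succ_self d)
    (le_sInf ?_)
  rintro m ⟨α, hne, rfl⟩
  exact_mod_cast Nat.succ_le_of_lt (hcoe α hne)
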